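/- Let m ≥ 2, K ≥ 0, and let C = (c_{ij}) be a real symmetric positive semidefinite m×m matrix. Let κ_{ij} (1 ≤ i, j ≤ m, i ≠ j) be real numbers with κ_{ij} = κ_{ji} and κ_{ij} ≤ K. Then (m-1) K ∑_{i,j=1}^m c_{ij}² - ∑_{i ≠ j} κ_{ij} (c_{ii} c_{jj} - c_{ij}²) ≥ 0. -/

import Mathlib

lemma psd_sq_le {m : ℕ} (C : Matrix (Fin m) (Fin m) ℝ) (hC : C.PosSemidef)
    (i j : Fin m) : (C i j) ^ 2 ≤ C i i * C j j := by
  rcases eq_or_ne i j with rfl | hij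
  · rw [sq]
  · have hsym : C j i = C i j := by
      have := hC.1.apply i j
      simpa using this
    have hQ : ∀ a b : ℝ,
        0 ≤ a ^ 2 * C i i + 2 * (a * b) * C i j + b ^ 2 * C j j := by
      intro a b
      have h := hC.dotProduct_mulVec_nonneg (Pi.single i a + Pi.single j b)
      simp only [star_trivial, Matrix.mulVec_add, Matrix.mulVec_single,
        dotProduct_add, add_dotProduct,
        single_dotProduct, Pi.add_apply, hsym] at h
      simp only [Pi.smul_apply, Matrix.col_apply, op_smul_eq_mul, hsym] at h
      linarith [h]
    have hy : 0 ≤ C j j := by have := hQ 0 1; linarith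
    rcases hy.eq_or_lt with hy0 | hy0
    · have hx : 0 ≤ C i i := by have := hQ 1 0; linarith
      rcases hx.eq_or_lt with hx0 | hx0
      · nlinarith [hQ 1 1, hQ (-1) 1]
      · nlinarith [hQ (-(C i j)) (C i i)]
    · nlinarith [hQ (C j j) (-(C i j))]

open Finset in
/-- pointwise nonnegativity of the curvature term `Q₁(dφ)`. -/
theorem stmt_2 (m : ℕ) (hm : 2 ≤ m) (K : ℝ) (hK : 0 ≤ K)
    (C : Matrix (Fin m) (Fin m) ℝ) (hC : C.PosSemidef)
    (κ : Fin m → Fin m → ℝ) (hκsymm : ∀ i j : Fin m, i ≠ j → κ i j = κ j i)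
    (hκ : ∀ i j : Fin m, i ≠ j → κ i j ≤ K) :
    0 ≤ ((m : ℝ) - 1) * K * ∑ i : Fin m, ∑ j : Fin m, (C i j) ^ 2
        - ∑ i : Fin m, ∑ j : Fin m,
            (if i ≠ j then κ i j * (C i i * C j j - (C i j) ^ 2) else 0) := by
  have hkey : ∀ i j : Fin m, (C i j) ^ 2 ≤ C i i * C j j := psd_sq_le C hC
  have hdiag : ∀ i : Fin m, 0 ≤ C i i := by
    intro i
    have h := hC.dotProduct_mulVec_nonneg (Pi.single i 1)
    simpa [Matrix.mulVec_single, single_dotProduct] using h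
  -- Step 1: bound the κ-sum by K * ∑ off-diagonal products
  have step1 : (∑ i : Fin m, ∑ j : Fin m,
      (if i ≠ j then κ i j * (C i i * C j j - (C i j) ^ 2) else 0))
      ≤ ∑ i : Fin m, ∑ j : Fin m,
        (if i ≠ j then K * (C i i * C j j) else 0) := by
    refine Finset.sum_le_sum fun i _ => Finset.sum_le_sum fun j _ => ?_
    by_cases h : i ≠ j
    · rw [if_pos h, if_pos h]
      have hd : 0 ≤ C i i * C j j - (C i j) ^ 2 := by linarith [hkey i j]
      have h1 : κ i j * (C i i * C j j - (C i j) ^ 2)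
          ≤ K * (C i i * C j j - (C i j) ^ 2) :=
        mul_le_mul_of_nonneg_right (hκ i j h) hd
      nlinarith [sq_nonneg (C i j)]
    · simp [h]
  -- Step 2: evaluate the off-diagonal product sum
  have step2 : (∑ i : Fin m, ∑ j : Fin m,
      (if i ≠ j then K * (C i i * C j j) else 0))
      = K * ((∑ i : Fin m, C i i) ^ 2 - ∑ i : Fin m, (C i i) ^ 2) := by
    have e1 : ∀ i j : Fin m, (if i ≠ j then K * (C i i * C j j) else 0)
        = K * (C i i * C j j) - (if i = j then K * (C i i * C j j) else 0) := by
      intro i j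
      by_cases h : i = j <;> simp [h]
    simp_rw [e1, Finset.sum_sub_distrib]
    have e2 : ∀ i : Fin m, (∑ j : Fin m, if i = j then K * (C i i * C j j) else 0)
        = K * (C i i) ^ 2 := by
      intro i
      rw [Finset.sum_ite_eq (Finset.univ : Finset (Fin m)) i
        (fun j => K * (C i i * C j j))]
      simp [sq]
    simp_rw [e2]
    rw [← Finset.mul_sum]
    have e3 : (∑ i : Fin m, ∑ j : Fin m, K * (C i i * C j j))
        = K * (∑ i : Fin m, C i i) ^ 2 := by
      rw [sq, Finset.sum_mul_sum, Finset.mul_sum]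
      exact Finset.sum_congr rfl fun i _ => by rw [Finset.mul_sum]
    rw [e3, mul_sub]
  -- Step 3: Cauchy-Schwarz on the trace
  have step3 : (∑ i : Fin m, C i i) ^ 2 ≤ (m : ℝ) * ∑ i : Fin m, (C i i) ^ 2 := by
    have := sq_sum_le_card_mul_sum_sq (s := (Finset.univ : Finset (Fin m)))
      (f := fun i => C i i)
    simpa using this
  -- Step 4: diagonal squares are at most the full square sum
  have step4 : (∑ i : Fin m, (C i i) ^ 2) ≤ ∑ i : Fin m, ∑ j : Fin m, (C i j) ^ 2 := by
    refine Finset.sum_le_sum fun i _ => ?_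
    exact Finset.single_le_sum (fun j _ => sq_nonneg (C i j)) (Finset.mem_univ i)
  have hm1 : (1 : ℝ) ≤ (m : ℝ) - 1 := by
    have : (2 : ℝ) ≤ (m : ℝ) := by exact_mod_cast hm
    linarith
  have hD : 0 ≤ ∑ i : Fin m, (C i i) ^ 2 :=
    Finset.sum_nonneg fun i _ => sq_nonneg _
  have hS2 : 0 ≤ ∑ i : Fin m, ∑ j : Fin m, (C i j) ^ 2 :=
    Finset.sum_nonneg fun i _ => Finset.sum_nonneg fun j _ => sq_nonneg _
  have chain : K * ((∑ i : Fin m, C i i) ^ 2 - ∑ i : Fin m, (C i i) ^ 2)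
      ≤ ((m : ℝ) - 1) * K * ∑ i : Fin m, ∑ j : Fin m, (C i j) ^ 2 := by
    have h1 : (∑ i : Fin m, C i i) ^ 2 - ∑ i : Fin m, (C i i) ^ 2
        ≤ ((m : ℝ) - 1) * ∑ i : Fin m, (C i i) ^ 2 := by linarith
    have h2 : ((m : ℝ) - 1) * ∑ i : Fin m, (C i i) ^ 2
        ≤ ((m : ℝ) - 1) * ∑ i : Fin m, ∑ j : Fin m, (C i j) ^ 2 := by
      apply mul_le_mul_of_nonneg_left step4; linarith
    calc K * ((∑ i : Fin m, C i i) ^ 2 - ∑ i : Fin m, (C i i) ^ 2)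
        ≤ K * (((m : ℝ) - 1) * ∑ i : Fin m, ∑ j : Fin m, (C i j) ^ 2) :=
          mul_le_mul_of_nonneg_left (le_trans h1 h2) hK
      _ = ((m : ℝ) - 1) * K * ∑ i : Fin m, ∑ j : Fin m, (C i j) ^ 2 := by ring
  linarith [step1, step2, chain]
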